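/- Let X be a locally compact metrizable space and φ : X → X a homeomorphism. Let X_w denote the set of points of X possessing an open wandering neighborhood. Then the smallest norm-closed subalgebra of C₀(X) containing every h ∈ C₀(X) whose cozero set D(h) = {x ∈ X : h(x) ≠ 0} is wandering equals the ideal {f ∈ C₀(X) : f(x) = 0 for all x ∈ X \ X_w}. -/

import Mathlib

open Filter Topology ZeroAtInfty

private theorem c0_sum_apply {X : Type*} [TopologicalSpace X] {ι : Type*} (s : Finset ι)
    (h : ι → C₀(X, ℂ)) (x : X) : (∑ i ∈ s, h i) x = ∑ i ∈ s, h i x :=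
  map_sum (AddMonoidHom.mk ⟨fun g : C₀(X, ℂ) => g x, rfl⟩ (fun _ _ => rfl)) h s

/-- The smallest norm-closed subalgebra of `C₀(X)` containing every function
whose cozero set is wandering is the ideal of functions vanishing off the set
`X_w` of wandering points. -/
theorem closed_subalgebra_generated_by_wandering_cozero_functions
    {X : Type*} [TopologicalSpace X] [LocallyCompactSpace X]
    [TopologicalSpace.MetrizableSpace X]
    (φ : X ≃ₜ X) :
    closure ((NonUnitalAlgebra.adjoin ℂ
        {h : C₀(X, ℂ) | ∀ m n : ℕ, m ≠ n →
          ((⇑φ)^[m] '' {x : X | h x ≠ 0}) ∩ ((⇑φ)^[n] '' {x : X | h x ≠ 0}) = ∅} :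
        NonUnitalSubalgebra ℂ C₀(X, ℂ)) : Set C₀(X, ℂ)) =
      {f : C₀(X, ℂ) | ∀ x : X,
        x ∉ {y : X | ∃ U : Set X, IsOpen U ∧ y ∈ U ∧ ∀ m n : ℕ, m ≠ n →
          ((⇑φ)^[m] '' U) ∩ ((⇑φ)^[n] '' U) = ∅} → f x = 0} := by
  classical
  letI : MetricSpace X := TopologicalSpace.metrizableSpaceMetric X
  set Wand : Set X → Prop := fun U => ∀ m n : ℕ, m ≠ n →
      ((⇑φ)^[m] '' U) ∩ ((⇑φ)^[n] '' U) = ∅ with hWand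
  set W : Set X := {y : X | ∃ U : Set X, IsOpen U ∧ y ∈ U ∧ Wand U} with hWdef
  set S : Set C₀(X, ℂ) := {h : C₀(X, ℂ) | Wand {x : X | h x ≠ 0}} with hSdef
  -- wandering is inherited by subsets
  have wand_mono : ∀ {A U : Set X}, A ⊆ U → Wand U → Wand A := by
    intro A U hAU hU m n hmn
    refine Set.eq_empty_of_subset_empty ?_
    rw [← hU m n hmn]
    exact Set.inter_subset_inter (Set.image_mono hAU) (Set.image_mono hAU)
  -- the evaluation maps are continuous
  have heval : ∀ x : X, Continuous fun g : C₀(X, ℂ) => g x := by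
    intro x
    have h1 : Continuous (fun g : C₀(X, ℂ) => g.toBCF) :=
      ZeroAtInftyContinuousMap.isometry_toBCF.continuous
    exact (continuous_eval_const (F := BoundedContinuousFunction X ℂ) x).comp h1
  apply Set.Subset.antisymm
  · -- closure of the adjoined algebra is contained in the ideal
    have hclosed : IsClosed {f : C₀(X, ℂ) | ∀ x : X, x ∉ W → f x = 0} := by
      have : {f : C₀(X, ℂ) | ∀ x : X, x ∉ W → f x = 0} =
          ⋂ (x : X) (_ : x ∉ W), (fun g : C₀(X, ℂ) => g x) ⁻¹' {0} := by
        ext f; simp [Set.mem_iInter]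
      rw [this]
      exact isClosed_iInter fun x => isClosed_iInter fun _ =>
        (isClosed_singleton).preimage (heval x)
    refine closure_minimal ?_ hclosed
    have : (NonUnitalAlgebra.adjoin ℂ S : NonUnitalSubalgebra ℂ C₀(X, ℂ)) ≤
        { carrier := {f : C₀(X, ℂ) | ∀ x : X, x ∉ W → f x = 0}
          add_mem' := fun {f g} hf hg x hx => by
            simp only [Set.mem_setOf_eq] at hf hg
            simp [hf x hx, hg x hx]
          zero_mem' := fun x _ => rfl
          mul_mem' := fun {f g} hf hg x hx => by
            simp only [Set.mem_setOf_eq] at hf hg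
            simp [hf x hx]
          smul_mem' := fun c {f} hf x hx => by
            simp only [Set.mem_setOf_eq] at hf
            simp [hf x hx] } := by
      apply NonUnitalAlgebra.adjoin_le
      intro h hh x hx
      by_contra hne
      exact hx ⟨{y : X | h y ≠ 0}, isOpen_ne_fun h.continuous continuous_const, hne, hh⟩
    exact this
  · -- the ideal is contained in the closure
    intro f hf
    simp only [Set.mem_setOf_eq] at hf
    rw [Metric.mem_closure_iff]
    intro ε hε
    -- the set where ‖f‖ ≥ ε/2 is compact and contained in W
    set K : Set X := {x : X | ε / 2 ≤ ‖f x‖} with hKdef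
    have hKclosed : IsClosed K := isClosed_le continuous_const f.continuous.norm
    obtain ⟨C, hCcomp, hC⟩ : ∃ C : Set X, IsCompact C ∧ ∀ x ∉ C, ‖f x‖ < ε / 2 := by
      have h0 := f.zero_at_infty'
      have := Metric.tendsto_nhds.mp h0 (ε / 2) (by linarith)
      rw [Filter.eventually_iff, Filter.mem_cocompact] at this
      obtain ⟨C, hC1, hC2⟩ := this
      refine ⟨C, hC1, fun x hx => ?_⟩
      have := hC2 hx
      simpa using this
    have hKC : K ⊆ C := fun x hx => by
      by_contra hxC
      exact absurd hx (by simpa [hKdef] using not_le.mpr (hC x hxC))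
    have hKcomp : IsCompact K := hCcomp.of_isClosed_subset hKclosed hKC
    have hKW : K ⊆ W := by
      intro x hx
      by_contra hxW
      have := hf x hxW
      have : ‖f x‖ = 0 := by rw [this]; simp
      have hx' : ε / 2 ≤ ‖f x‖ := hx
      rw [this] at hx'
      linarith
    -- choose wandering open neighborhoods for points of K
    have hUex : ∀ x : K, ∃ U : Set X, IsOpen U ∧ (x : X) ∈ U ∧ Wand U := fun x => hKW x.2
    choose U hUopen hUmem hUwand using hUex
    obtain ⟨t, ht⟩ : ∃ t : Finset K, K ⊆ ⋃ i ∈ t, U i :=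
      hKcomp.elim_finite_subcover U hUopen (fun x hx => Set.mem_iUnion.mpr ⟨⟨x, hx⟩, hUmem _⟩)
    -- partition of unity subordinate to the finite cover
    have hcover : K ⊆ ⋃ i : t, U i := by
      intro x hx
      obtain ⟨i, hi, hxi⟩ := Set.mem_iUnion₂.mp (ht hx)
      exact Set.mem_iUnion.mpr ⟨⟨i, hi⟩, hxi⟩
    obtain ⟨p, hp⟩ := PartitionOfUnity.exists_isSubordinate hKclosed (fun i : t => U i)
      (fun i => hUopen i) hcover
    -- the approximating functions
    have key : ∀ i : t, ∃ h : C₀(X, ℂ), h ∈ S ∧ ∀ x : X, h x = (p i x : ℂ) * f x := by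
      intro i
      refine ⟨⟨⟨fun x => (p i x : ℂ) * f x,
        (Complex.continuous_ofReal.comp (p i).continuous).mul f.continuous⟩, ?_⟩, ?_, fun _ => rfl⟩
      · -- zero at infinity
        refine tendsto_zero_iff_norm_tendsto_zero.mpr ?_
        have hb : ∀ x : X, ‖(p i x : ℂ) * f x‖ ≤ ‖f x‖ := by
          intro x
          rw [norm_mul]
          have h1 : ‖(p i x : ℂ)‖ ≤ 1 := by
            rw [Complex.norm_real, Real.norm_eq_abs, abs_of_nonneg (p.nonneg i x)]
            exact p.le_one i x
          calc ‖(p i x : ℂ)‖ * ‖f x‖ ≤ 1 * ‖f x‖ :=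
                mul_le_mul_of_nonneg_right h1 (norm_nonneg _)
            _ = ‖f x‖ := one_mul _
        exact squeeze_zero (fun x => norm_nonneg _) hb
          (tendsto_zero_iff_norm_tendsto_zero.mp f.zero_at_infty')
      · -- the cozero set is wandering
        refine wand_mono ?_ (hUwand i)
        intro x hx
        simp only [Set.mem_setOf_eq] at hx
        have hpx : p i x ≠ 0 := by
          intro h0
          apply hx
          show (p i x : ℂ) * f x = 0
          rw [h0]; simp
        have : x ∈ tsupport (p i) := subset_closure (by simpa [Function.mem_support] using hpx)
        exact hp i this
    choose h hhS hhval using key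
    refine ⟨∑ i : t, h i, ?_, ?_⟩
    · exact sum_mem fun i _ => NonUnitalAlgebra.subset_adjoin ℂ (hhS i)
    · -- estimate the distance
      rw [dist_eq_norm]
      have hle : ‖f - ∑ i : t, h i‖ ≤ ε / 2 := by
        rw [← ZeroAtInftyContinuousMap.norm_toBCF_eq_norm]
        refine (BoundedContinuousFunction.norm_le (by linarith)).mpr ?_
        intro x
        have hval : (f - ∑ i : t, h i) x = (1 - (∑ i : t, (p i x : ℂ))) * f x := by
          have : (∑ i : t, h i) x = ∑ i : t, (p i x : ℂ) * f x := by
            rw [c0_sum_apply Finset.univ h x]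
            exact Finset.sum_congr rfl fun i _ => hhval i x
          show f x - (∑ i : t, h i) x = _
          rw [this, ← Finset.sum_mul]
          ring
        show ‖(f - ∑ i : t, h i) x‖ ≤ ε / 2
        rw [hval]
        have hsum_le : (0 : ℝ) ≤ ∑ i : t, p i x ∧ (∑ i : t, p i x) ≤ 1 := by
          constructor
          · exact Finset.sum_nonneg fun i _ => p.nonneg i x
          · have := p.sum_le_one x
            rwa [finsum_eq_sum_of_fintype] at this
        by_cases hxK : x ∈ K
        · have h1 : (∑ i : t, p i x) = 1 := by
            have := p.sum_eq_one hxK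
            rwa [finsum_eq_sum_of_fintype] at this
          have : (1 - (∑ i : t, (p i x : ℂ))) = 0 := by
            rw [← Complex.ofReal_sum, h1]
            simp
          rw [this]
          simp
          linarith
        · have hfx : ‖f x‖ ≤ ε / 2 := le_of_lt (by
            have : ¬ ε / 2 ≤ ‖f x‖ := hxK
            linarith [not_le.mp this])
          rw [norm_mul]
          have h2 : ‖(1 : ℂ) - (∑ i : t, (p i x : ℂ))‖ ≤ 1 := by
            rw [← Complex.ofReal_sum, ← Complex.ofReal_one, ← Complex.ofReal_sub,
              Complex.norm_real, Real.norm_eq_abs, abs_of_nonneg (by linarith [hsum_le.2])]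
            linarith [hsum_le.1]
          calc ‖(1 : ℂ) - (∑ i : t, (p i x : ℂ))‖ * ‖f x‖ ≤ 1 * (ε / 2) :=
                mul_le_mul h2 hfx (norm_nonneg _) zero_le_one
            _ = ε / 2 := one_mul _
      linarith
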